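/- For ξ ≥ 1 and d ≥ 1, the cardinality of the index set G(ξ) associated with the Smolyak quadrature satisfies |G(ξ)| ≍ Σ_{k ∈ ℕ₀^d, |k|₁ ≤ ξ} 2^{|k|₁} ≍ 2^ξ ξ^{d−1}, i.e., there exist constants c, C > 0 depending only on d such that c·2^ξ ξ^{d−1} ≤ Σ_{|k|₁ ≤ ξ} 2^{|k|₁} ≤ C·2^ξ ξ^{d−1}. -/

import Mathlib

open Finset

private lemma level_card (e n m : ℕ) :
    ((Fintype.piFinset fun _ : Fin (e+1) => Finset.range (n+1)).filter
      (fun k => ∑ i, k i = m)).card ≤ (m+1)^e := by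
  classical
  have h : ((Fintype.piFinset fun _ : Fin (e+1) => Finset.range (n+1)).filter
      (fun k => ∑ i, k i = m)).card ≤
      (Fintype.piFinset fun _ : Fin e => Finset.range (m+1)).card := by
    apply Finset.card_le_card_of_injOn (fun k => Fin.init k)
    · intro k hk
      simp only [Finset.mem_coe, Finset.mem_filter, Fintype.mem_piFinset, Finset.mem_range] at hk ⊢
      intro i
      have hle : k (Fin.castSucc i) ≤ ∑ j, k j :=
        Finset.single_le_sum (fun j _ => Nat.zero_le _) (Finset.mem_univ _)
      have := hk.2
      simp only [Fin.init]
      omega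
    · intro k hk k' hk' h
      simp only [Finset.coe_filter, Set.mem_setOf_eq] at hk hk'
      have hs : ∑ j, k j = ∑ j, k' j := hk.2.trans hk'.2.symm
      rw [Fin.sum_univ_castSucc, Fin.sum_univ_castSucc] at hs
      have hinit : ∀ i : Fin e, k (Fin.castSucc i) = k' (Fin.castSucc i) := by
        intro i; exact congrFun h i
      have hsum : (∑ i : Fin e, k (Fin.castSucc i)) = ∑ i : Fin e, k' (Fin.castSucc i) :=
        Finset.sum_congr rfl fun i _ => hinit i
      have hlast : k (Fin.last e) = k' (Fin.last e) := by omega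
      have := Fin.snoc_init_self k
      have := Fin.snoc_init_self k'
      calc k = Fin.snoc (Fin.init k) (k (Fin.last e)) := (Fin.snoc_init_self k).symm
        _ = Fin.snoc (Fin.init k') (k' (Fin.last e)) := by
              rw [show Fin.init k = Fin.init k' from h, hlast]
        _ = k' := Fin.snoc_init_self k'
  calc _ ≤ _ := h
    _ = (m+1)^e := by
      rw [Fintype.card_piFinset]
      simp

private lemma upper_nat (e n : ℕ) :
    (∑ k ∈ (Fintype.piFinset fun _ : Fin (e+1) => Finset.range (n+1)).filter
        (fun k => ∑ i, k i ≤ n), 2 ^ (∑ i, k i)) ≤ (n+1)^e * 2^(n+1) := by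
  classical
  set F := (Fintype.piFinset fun _ : Fin (e+1) => Finset.range (n+1)).filter
      (fun k => ∑ i, k i ≤ n) with hF
  have hmaps : ∀ k ∈ F, (∑ i, k i) ∈ Finset.range (n+1) := by
    intro k hk
    simp only [hF, Finset.mem_filter] at hk
    simpa [Nat.lt_succ_iff] using hk.2
  rw [← Finset.sum_fiberwise_of_maps_to hmaps (fun k => 2 ^ (∑ i, k i))]
  have step : ∀ m ∈ Finset.range (n+1),
      (∑ k ∈ F.filter (fun k => ∑ i, k i = m), 2 ^ (∑ i, k i)) ≤ (n+1)^e * 2^m := by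
    intro m hm
    have h1 : (∑ k ∈ F.filter (fun k => ∑ i, k i = m), 2 ^ (∑ i, k i)) =
        (F.filter (fun k => ∑ i, k i = m)).card * 2^m := by
      rw [Finset.sum_congr rfl (fun k hk => ?_), Finset.sum_const, smul_eq_mul]
      simp only [Finset.mem_filter] at hk
      rw [hk.2]
    rw [h1]
    have hsub : F.filter (fun k => ∑ i, k i = m) ⊆
        (Fintype.piFinset fun _ : Fin (e+1) => Finset.range (n+1)).filter
          (fun k => ∑ i, k i = m) := by
      intro k hk
      simp only [hF, Finset.mem_filter, and_assoc] at hk ⊢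
      exact ⟨hk.1, hk.2.2⟩
    have h2 : (F.filter (fun k => ∑ i, k i = m)).card ≤ (m+1)^e :=
      le_trans (Finset.card_le_card hsub) (level_card e n m)
    have hmn : m + 1 ≤ n + 1 := Finset.mem_range.mp hm
    have h3 : (m+1)^e ≤ (n+1)^e := Nat.pow_le_pow_left hmn e
    exact Nat.mul_le_mul (le_trans h2 h3) le_rfl
  calc _ ≤ ∑ m ∈ Finset.range (n+1), (n+1)^e * 2^m := Finset.sum_le_sum step
    _ = (n+1)^e * ∑ m ∈ Finset.range (n+1), 2^m := by rw [Finset.mul_sum]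
    _ ≤ (n+1)^e * 2^(n+1) := by
        apply Nat.mul_le_mul_left
        have h : ∑ m ∈ Finset.range (n+1), 2^m = 2^(n+1) - 1 := by
          simpa using Nat.geomSum_eq (le_refl 2) (n+1)
        rw [h]
        exact Nat.sub_le _ _
  
set_option maxHeartbeats 1000000 in
private lemma lower_nat (e n : ℕ) :
    (n/(e+1) + 1)^e * 2^n ≤
      ∑ k ∈ (Fintype.piFinset fun _ : Fin (e+1) => Finset.range (n+1)).filter
        (fun k => ∑ i, k i ≤ n), 2 ^ (∑ i, k i) := by
  classical
  set q := n / (e+1) with hq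
  set F := (Fintype.piFinset fun _ : Fin (e+1) => Finset.range (n+1)).filter
      (fun k => ∑ i, k i ≤ n) with hF
  set T := Fintype.piFinset fun _ : Fin e => Finset.range (q+1) with hT
  set g : (Fin e → ℕ) → (Fin (e+1) → ℕ) := fun v => Fin.snoc v (n - ∑ i, v i) with hg
  have hvsum : ∀ v ∈ T, ∑ i, v i ≤ n := by
    intro v hv
    simp only [hT, Fintype.mem_piFinset, Finset.mem_range] at hv
    have h1 : ∑ i, v i ≤ Finset.univ.card • q :=
      Finset.sum_le_card_nsmul _ _ _ (fun i _ => by have := hv i; omega)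
    have h2 : (e+1) * q ≤ n := by
      rw [hq, mul_comm]
      exact Nat.div_mul_le_self n (e+1)
    simp only [Finset.card_univ, Fintype.card_fin, smul_eq_mul] at h1
    calc ∑ i, v i ≤ e * q := h1
      _ ≤ (e+1) * q := Nat.mul_le_mul (Nat.le_succ e) le_rfl
      _ ≤ n := h2
  have hgsum : ∀ v ∈ T, ∑ i, g v i = n := by
    intro v hv
    rw [Fin.sum_univ_castSucc]
    have h1 : ∀ i : Fin e, g v (Fin.castSucc i) = v i := fun i => Fin.snoc_castSucc _ _ _
    have h2 : g v (Fin.last e) = n - ∑ i, v i := Fin.snoc_last _ _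
    rw [Finset.sum_congr rfl (fun i _ => h1 i), h2]
    have h3 := hvsum v hv
    have h4 : Finset.univ.sum v = ∑ i, v i := rfl
    omega
  have hginj : Function.Injective g := by
    intro v v' hvv
    have := congrArg Fin.init hvv
    rwa [hg, Fin.init_snoc, Fin.init_snoc] at this
  have hmaps : ∀ v ∈ T, g v ∈ F := by
    intro v hv
    simp only [hT, Fintype.mem_piFinset, Finset.mem_range] at hv
    simp only [hF, Finset.mem_filter, Fintype.mem_piFinset, Finset.mem_range]
    constructor
    · intro i
      refine Fin.lastCases ?_ ?_ i
      · rw [show g v (Fin.last e) = n - ∑ i, v i from Fin.snoc_last _ _]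
        omega
      · intro j
        rw [show g v (Fin.castSucc j) = v j from Fin.snoc_castSucc _ _ _]
        have hvj := hv j
        have : q ≤ n := Nat.div_le_self n (e+1)
        omega
    · rw [hgsum v (by simp only [hT, Fintype.mem_piFinset, Finset.mem_range]; exact hv)]
  have himage : T.image g ⊆ F := by
    intro k hk
    rw [Finset.mem_image] at hk
    obtain ⟨v, hv, rfl⟩ := hk
    exact hmaps v hv
  have hcard : (T.image g).card = (q+1)^e := by
    rw [Finset.card_image_of_injective _ hginj, hT, Fintype.card_piFinset]
    simp
  have hconst : ∀ k ∈ T.image g, 2 ^ (∑ i, k i) = 2^n := by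
    intro k hk
    rw [Finset.mem_image] at hk
    obtain ⟨v, hv, rfl⟩ := hk
    rw [hgsum v hv]
  calc (q + 1)^e * 2^n = ∑ k ∈ T.image g, 2^n := by
        rw [Finset.sum_const, smul_eq_mul, hcard]
    _ = ∑ k ∈ T.image g, 2 ^ (∑ i, k i) := (Finset.sum_congr rfl hconst).symm
    _ ≤ ∑ k ∈ F, 2 ^ (∑ i, k i) := Finset.sum_le_sum_of_subset himage

theorem hyperbolic_cross_cardinality (d : ℕ) (hd : 1 ≤ d) :
    ∃ c C : ℝ, 0 < c ∧ 0 < C ∧ ∀ ξ : ℝ, 1 ≤ ξ →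
      c * (2 : ℝ) ^ ξ * ξ ^ (d - 1) ≤
        (∑' k : {k : Fin d → ℕ // (∑ i, (k i : ℝ)) ≤ ξ}, (2 : ℝ) ^ (∑ i, k.1 i)) ∧
      (∑' k : {k : Fin d → ℕ // (∑ i, (k i : ℝ)) ≤ ξ}, (2 : ℝ) ^ (∑ i, k.1 i)) ≤
        C * (2 : ℝ) ^ ξ * ξ ^ (d - 1) := by
  classical
  obtain ⟨e, rfl⟩ : ∃ e, d = e + 1 := ⟨d - 1, by omega⟩
  simp only [Nat.add_sub_cancel]
  refine ⟨(2 * ((e:ℝ)+1)^e)⁻¹, 2^(e+1), by positivity, by positivity, fun ξ hξ => ?_⟩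
  have hξ0 : (0:ℝ) ≤ ξ := by linarith
  set n := ⌊ξ⌋₊ with hn
  have hnξ : (n:ℝ) ≤ ξ := Nat.floor_le hξ0
  have hξn : ξ < n + 1 := Nat.lt_floor_add_one ξ
  set F := (Fintype.piFinset fun _ : Fin (e+1) => Finset.range (n+1)).filter
      (fun k => ∑ i, k i ≤ n) with hF
  have hmem : ∀ k : Fin (e+1) → ℕ, ((∑ i, (k i:ℝ)) ≤ ξ) ↔ k ∈ F := by
    intro k
    simp only [hF, Finset.mem_filter, Fintype.mem_piFinset, Finset.mem_range]
    constructor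
    · intro h
      have h' : ((∑ i, k i : ℕ) : ℝ) ≤ ξ := by push_cast; exact h
      have hsn : ∑ i, k i ≤ n := Nat.le_floor h'
      refine ⟨fun i => ?_, hsn⟩
      have : k i ≤ ∑ j, k j :=
        Finset.single_le_sum (fun j _ => Nat.zero_le _) (Finset.mem_univ i)
      omega
    · intro ⟨_, h⟩
      calc (∑ i, (k i:ℝ)) = ((∑ i, k i : ℕ) : ℝ) := by push_cast; ring
        _ ≤ (n : ℝ) := by exact_mod_cast h
        _ ≤ ξ := hnξ
  have key : (∑' k : {k : Fin (e+1) → ℕ // (∑ i, (k i : ℝ)) ≤ ξ}, (2 : ℝ) ^ (∑ i, k.1 i))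
      = ((∑ k ∈ F, 2 ^ (∑ i, k i) : ℕ) : ℝ) := by
    push_cast
    rw [← Finset.tsum_subtype F (fun k => (2:ℝ) ^ (∑ i, k i))]
    exact ((Equiv.subtypeEquivRight hmem).symm.tsum_eq
      (fun k : {k : Fin (e+1) → ℕ // (∑ i, (k i : ℝ)) ≤ ξ} => (2:ℝ) ^ (∑ i, k.1 i))).symm
  rw [key]
  set q := n / (e+1) with hq
  -- basic real facts
  have h2n : (2:ℝ) ^ (n:ℕ) = (2:ℝ) ^ ((n:ℕ):ℝ) := by rw [Real.rpow_natCast]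
  have hup2 : (2:ℝ) ^ ((n:ℕ):ℝ) ≤ (2:ℝ) ^ ξ :=
    Real.rpow_le_rpow_of_exponent_le one_le_two hnξ
  have hlow2 : (2:ℝ) ^ ξ ≤ 2 * (2:ℝ) ^ (n:ℕ) := by
    have : (2:ℝ) ^ ξ ≤ (2:ℝ) ^ (((n+1:ℕ)):ℝ) :=
      Real.rpow_le_rpow_of_exponent_le one_le_two (by push_cast; linarith)
    rw [Real.rpow_natCast] at this
    calc (2:ℝ) ^ ξ ≤ (2:ℝ) ^ (n+1:ℕ) := this
      _ = 2 * (2:ℝ) ^ (n:ℕ) := by ring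
  constructor
  · -- lower bound
    have L := lower_nat e n
    have Lr : ((q + 1 : ℕ):ℝ)^e * (2:ℝ)^(n:ℕ) ≤ ((∑ k ∈ F, 2 ^ (∑ i, k i) : ℕ) : ℝ) := by
      exact_mod_cast L
    have hq1 : ξ ≤ ((e:ℝ)+1) * ((q:ℕ)+1) := by
      have hmod : (e+1) * q + n % (e+1) = n := Nat.div_add_mod n (e+1)
      have hmodlt : n % (e+1) < e + 1 := Nat.mod_lt _ (Nat.succ_pos e)
      have : n + 1 ≤ (e+1) * (q+1) := by nlinarith
      have : ((n:ℝ)) + 1 ≤ ((e:ℝ)+1) * ((q:ℕ)+1) := by exact_mod_cast this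
      linarith
    have hqpow : (ξ / ((e:ℝ)+1))^e ≤ ((q:ℕ)+1:ℝ)^e := by
      apply pow_le_pow_left₀ (by positivity)
      rw [div_le_iff₀ (by positivity)]
      linarith [hq1]
    have h2half : (2:ℝ)^ξ / 2 ≤ (2:ℝ)^(n:ℕ) := by linarith
    have heq : (2 * ((e:ℝ)+1)^e)⁻¹ * (2:ℝ)^ξ * ξ^e
        = (ξ / ((e:ℝ)+1))^e * ((2:ℝ)^ξ / 2) := by
      rw [div_pow]
      have he : ((e:ℝ)+1)^e ≠ 0 := by positivity
      field_simp
    calc (2 * ((e:ℝ)+1)^e)⁻¹ * (2:ℝ)^ξ * ξ^e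
        = (ξ / ((e:ℝ)+1))^e * ((2:ℝ)^ξ / 2) := heq
      _ ≤ ((q:ℕ)+1:ℝ)^e * (2:ℝ)^(n:ℕ) := by
          apply mul_le_mul hqpow h2half (by positivity) (by positivity)
      _ ≤ ((∑ k ∈ F, 2 ^ (∑ i, k i) : ℕ) : ℝ) := by exact_mod_cast Lr
  · -- upper bound
    have U := upper_nat e n
    have Ur : ((∑ k ∈ F, 2 ^ (∑ i, k i) : ℕ) : ℝ) ≤ ((n:ℝ)+1)^e * (2:ℝ)^(n+1:ℕ) := by
      exact_mod_cast U
    have hn2ξ : (n:ℝ) + 1 ≤ 2 * ξ := by linarith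
    calc ((∑ k ∈ F, 2 ^ (∑ i, k i) : ℕ) : ℝ)
        ≤ ((n:ℝ)+1)^e * (2:ℝ)^(n+1:ℕ) := Ur
      _ = ((n:ℝ)+1)^e * (2 * (2:ℝ)^(n:ℕ)) := by ring
      _ ≤ (2*ξ)^e * (2 * (2:ℝ)^ξ) := by
          apply mul_le_mul (pow_le_pow_left₀ (by positivity) hn2ξ e) ?_ (by positivity)
            (by positivity)
          have := hup2
          rw [← h2n] at this
          linarith
      _ = 2^(e+1) * (2:ℝ)^ξ * ξ^e := by
          rw [mul_pow]
          ring
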